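/- The annuity factor φ(r,T) = r·(1+r)^T/((1+r)^T − 1), defined for r > 0 and T > 0, is log-log-convex: the map (u,v) ↦ log φ(e^u, e^v) is convex on ℝ². -/

import Mathlib

/-- The annuity factor `φ(r, T) = r·(1+r)^T/((1+r)^T − 1)` for `r, T > 0`,
where `(1+r)^T = exp(T·log(1+r))`. -/
noncomputable def annuityRT (r T : ℝ) : ℝ :=
  r * (1 + r) ^ T / ((1 + r) ^ T - 1)

open Real Set

noncomputable def hh (w : ℝ) : ℝ := -Real.log (1 - Real.exp (-Real.exp w))

noncomputable def hh' (w : ℝ) : ℝ := -(Real.exp w / (Real.exp (Real.exp w) - 1))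

lemma expexp_gt_one (w : ℝ) : 1 < Real.exp (Real.exp w) :=
  Real.one_lt_exp_iff.mpr (Real.exp_pos w)

lemma one_sub_exp_neg_pos (w : ℝ) : 0 < 1 - Real.exp (-Real.exp w) := by
  have : Real.exp (-Real.exp w) < 1 := by
    rw [Real.exp_lt_one_iff]; simpa using Real.exp_pos w
  linarith

lemma hh_hasDeriv (w : ℝ) : HasDerivAt hh (hh' w) w := by
  have h1 : HasDerivAt (fun w : ℝ => -Real.exp w) (-Real.exp w) w := (Real.hasDerivAt_exp w).neg
  have h2 : HasDerivAt (fun w : ℝ => Real.exp (-Real.exp w))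
      (Real.exp (-Real.exp w) * -Real.exp w) w := (Real.hasDerivAt_exp _).comp w h1
  have h3 : HasDerivAt (fun w : ℝ => 1 - Real.exp (-Real.exp w))
      (0 - Real.exp (-Real.exp w) * -Real.exp w) w := (hasDerivAt_const w 1).sub h2
  have h4 := (Real.hasDerivAt_log (ne_of_gt (one_sub_exp_neg_pos w))).comp w h3
  have h5 := h4.neg
  refine h5.congr_deriv ?_
  symm
  show hh' w = -((1 - Real.exp (-Real.exp w))⁻¹ * (0 - Real.exp (-Real.exp w) * -Real.exp w))
  unfold hh'
  rw [Real.exp_neg]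
  have hpos : (0:ℝ) < Real.exp (Real.exp w) := Real.exp_pos _
  have hne : Real.exp (Real.exp w) - 1 ≠ 0 := ne_of_gt (by linarith [expexp_gt_one w])
  have hne2 : (1 : ℝ) - (Real.exp (Real.exp w))⁻¹ ≠ 0 := by
    have := one_sub_exp_neg_pos w
    rw [Real.exp_neg] at this
    exact ne_of_gt this
  field_simp
  ring

noncomputable def hh'' (w : ℝ) : ℝ :=
  -((Real.exp w * (Real.exp (Real.exp w) - 1) -
      Real.exp w * (Real.exp w * Real.exp (Real.exp w))) / (Real.exp (Real.exp w) - 1) ^ 2)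

lemma hh'_hasDeriv (w : ℝ) : HasDerivAt hh' (hh'' w) w := by
  have hne : Real.exp (Real.exp w) - 1 ≠ 0 := ne_of_gt (by linarith [expexp_gt_one w])
  have hd : HasDerivAt (fun w : ℝ => Real.exp (Real.exp w) - 1)
      (Real.exp (Real.exp w) * Real.exp w - 0) w :=
    (((Real.hasDerivAt_exp _).comp w (Real.hasDerivAt_exp w))).sub (hasDerivAt_const w 1)
  have h := ((Real.hasDerivAt_exp w).div hd hne).neg
  refine h.congr_deriv ?_
  symm
  unfold hh''
  field_simp
  ring

lemma hh''_nonneg (w : ℝ) : 0 ≤ hh'' w := by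
  unfold hh''
  have hx : (0:ℝ) < Real.exp w := Real.exp_pos w
  have key : Real.exp (Real.exp w) - 1 ≤ Real.exp w * Real.exp (Real.exp w) := by
    have h1 : 1 - Real.exp w ≤ Real.exp (-Real.exp w) := by
      have := Real.add_one_le_exp (-Real.exp w); linarith
    have h2 := mul_le_mul_of_nonneg_right h1 (le_of_lt (Real.exp_pos (Real.exp w)))
    rw [← Real.exp_add] at h2
    simp at h2
    nlinarith [Real.exp_pos (Real.exp w)]
  have hden : (0:ℝ) < (Real.exp (Real.exp w) - 1) ^ 2 :=
    pow_pos (by linarith [expexp_gt_one w]) 2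
  rw [neg_nonneg]
  apply div_nonpos_of_nonpos_of_nonneg _ (le_of_lt hden)
  nlinarith

lemma hh_convex : ConvexOn ℝ Set.univ hh := by
  apply convexOn_of_hasDerivWithinAt2_nonneg convex_univ
    (fun x _ => ((hh_hasDeriv x).continuousAt.continuousWithinAt))
    (fun x _ => (hh_hasDeriv x).hasDerivWithinAt)
    (fun x _ => (hh'_hasDeriv x).hasDerivWithinAt)
  intro x _
  exact hh''_nonneg x

lemma hh_antitone : Antitone hh := by
  intro a b hab
  unfold hh
  apply neg_le_neg
  apply Real.log_le_log (one_sub_exp_neg_pos a)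
  have : Real.exp (-Real.exp b) ≤ Real.exp (-Real.exp a) :=
    Real.exp_le_exp.mpr (neg_le_neg (Real.exp_le_exp.mpr hab))
  linarith

noncomputable def qq (u : ℝ) : ℝ := Real.log (Real.log (1 + Real.exp u))

noncomputable def qq' (u : ℝ) : ℝ :=
  Real.exp u / ((1 + Real.exp u) * Real.log (1 + Real.exp u))

lemma one_add_exp_pos (u : ℝ) : (0:ℝ) < 1 + Real.exp u := by positivity

lemma psi_pos (u : ℝ) : 0 < Real.log (1 + Real.exp u) :=
  Real.log_pos (by linarith [Real.exp_pos u])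

lemma psi_hasDeriv (u : ℝ) : HasDerivAt (fun u : ℝ => Real.log (1 + Real.exp u))
    ((1 + Real.exp u)⁻¹ * (0 + Real.exp u)) u := by
  have hi : HasDerivAt (fun u : ℝ => 1 + Real.exp u) (0 + Real.exp u) u :=
    (hasDerivAt_const u (1:ℝ)).add (Real.hasDerivAt_exp u)
  exact ((Real.hasDerivAt_log (ne_of_gt (one_add_exp_pos u))).comp u hi :)

lemma qq_hasDeriv (u : ℝ) : HasDerivAt qq (qq' u) u := by
  have h := (Real.hasDerivAt_log (ne_of_gt (psi_pos u))).comp u (psi_hasDeriv u)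
  refine h.congr_deriv ?_
  symm
  show qq' u = (Real.log (1 + Real.exp u))⁻¹ * ((1 + Real.exp u)⁻¹ * (0 + Real.exp u))
  unfold qq'
  have h1 := ne_of_gt (one_add_exp_pos u)
  have h2 := ne_of_gt (psi_pos u)
  field_simp
  ring

noncomputable def qq'' (u : ℝ) : ℝ :=
  (Real.exp u * ((1 + Real.exp u) * Real.log (1 + Real.exp u)) -
    Real.exp u * ((0 + Real.exp u) * Real.log (1 + Real.exp u) +
      (1 + Real.exp u) * ((1 + Real.exp u)⁻¹ * (0 + Real.exp u)))) /
    ((1 + Real.exp u) * Real.log (1 + Real.exp u)) ^ 2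

lemma qq'_hasDeriv (u : ℝ) : HasDerivAt qq' (qq'' u) u := by
  have hD : HasDerivAt (fun u : ℝ => (1 + Real.exp u) * Real.log (1 + Real.exp u))
      ((0 + Real.exp u) * Real.log (1 + Real.exp u) +
        (1 + Real.exp u) * ((1 + Real.exp u)⁻¹ * (0 + Real.exp u))) u :=
    ((hasDerivAt_const u 1).add (Real.hasDerivAt_exp u)).mul (psi_hasDeriv u)
  have hne : (1 + Real.exp u) * Real.log (1 + Real.exp u) ≠ 0 :=
    ne_of_gt (mul_pos (one_add_exp_pos u) (psi_pos u))
  exact (Real.hasDerivAt_exp u).div hD hne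

lemma qq''_nonpos (u : ℝ) : qq'' u ≤ 0 := by
  unfold qq''
  have hx : (0:ℝ) < Real.exp u := Real.exp_pos u
  have h1 := ne_of_gt (one_add_exp_pos u)
  have hψ : Real.log (1 + Real.exp u) ≤ Real.exp u := by
    have := Real.log_le_sub_one_of_pos (one_add_exp_pos u)
    linarith
  have hψ0 := psi_pos u
  have hden : (0:ℝ) < ((1 + Real.exp u) * Real.log (1 + Real.exp u)) ^ 2 :=
    pow_pos (mul_pos (one_add_exp_pos u) hψ0) 2
  apply div_nonpos_of_nonpos_of_nonneg _ (le_of_lt hden)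
  have hinv : (1 + Real.exp u) * ((1 + Real.exp u)⁻¹ * (0 + Real.exp u)) = Real.exp u := by
    field_simp
    ring
  rw [hinv]
  nlinarith

lemma qq_concave : ConcaveOn ℝ Set.univ qq := by
  apply concaveOn_of_hasDerivWithinAt2_nonpos convex_univ
    (fun x _ => ((qq_hasDeriv x).continuousAt.continuousWithinAt))
    (fun x _ => (qq_hasDeriv x).hasDerivWithinAt)
    (fun x _ => (qq'_hasDeriv x).hasDerivWithinAt)
  intro x _
  exact qq''_nonpos x

lemma FF_convex :
    ConvexOn ℝ Set.univ (fun uv : ℝ × ℝ => uv.1 + hh (qq uv.1 + uv.2)) := by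
  refine ⟨convex_univ, ?_⟩
  rintro x - y - a b ha hb hab
  simp only [smul_eq_mul, Prod.fst_add, Prod.snd_add, Prod.smul_fst, Prod.smul_snd]
  have hq : a • qq x.1 + b • qq y.1 ≤ qq (a • x.1 + b • y.1) :=
    qq_concave.2 (Set.mem_univ x.1) (Set.mem_univ y.1) ha hb hab
  simp only [smul_eq_mul] at hq
  have hL : hh (qq (a * x.1 + b * y.1) + (a * x.2 + b * y.2)) ≤
      hh (a * (qq x.1 + x.2) + b * (qq y.1 + y.2)) := by
    apply hh_antitone
    nlinarith
  have hc : hh (a • (qq x.1 + x.2) + b • (qq y.1 + y.2)) ≤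
      a • hh (qq x.1 + x.2) + b • hh (qq y.1 + y.2) :=
    hh_convex.2 (Set.mem_univ _) (Set.mem_univ _) ha hb hab
  simp only [smul_eq_mul] at hc
  nlinarith [hL.trans hc]

lemma eq_FF (u v : ℝ) :
    Real.log (annuityRT (Real.exp u) (Real.exp v)) = u + hh (qq u + v) := by
  have hr : 0 < Real.exp u := Real.exp_pos u
  have hc : 0 < Real.log (1 + Real.exp u) := psi_pos u
  have hct : 0 < Real.log (1 + Real.exp u) * Real.exp v := mul_pos hc (Real.exp_pos v)
  have hA : (1 + Real.exp u) ^ (Real.exp v) =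
      Real.exp (Real.log (1 + Real.exp u) * Real.exp v) :=
    Real.rpow_def_of_pos (by linarith) _
  set A : ℝ := (1 + Real.exp u) ^ (Real.exp v) with hAdef
  have hApos : 0 < A := by rw [hA]; exact Real.exp_pos _
  have hA1 : (1:ℝ) < A := by rw [hA]; exact Real.one_lt_exp_iff.mpr hct
  have hAm1 : (0:ℝ) < A - 1 := by linarith
  have hexp : Real.exp (qq u + v) = Real.log (1 + Real.exp u) * Real.exp v := by
    rw [Real.exp_add]
    unfold qq
    rw [Real.exp_log hc]
  unfold annuityRT hh
  rw [hexp, Real.exp_neg, ← hA]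
  have h1A : (1:ℝ) - A⁻¹ = (A - 1) / A := by field_simp
  rw [h1A, Real.log_div (ne_of_gt hAm1) (ne_of_gt hApos),
    Real.log_div (by positivity) (ne_of_gt hAm1),
    Real.log_mul (ne_of_gt hr) (ne_of_gt hApos), Real.log_exp]
  ring

/-- **Log-log-convexity of the annuity factor.** The map
`(u, v) ↦ log φ(e^u, e^v)` is convex on `ℝ²`. -/
theorem annuity_logLogConvex :
    ConvexOn ℝ Set.univ
      (fun uv : ℝ × ℝ => Real.log (annuityRT (Real.exp uv.1) (Real.exp uv.2))) := by
  have heq : (fun uv : ℝ × ℝ => Real.log (annuityRT (Real.exp uv.1) (Real.exp uv.2))) =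
      (fun uv : ℝ × ℝ => uv.1 + hh (qq uv.1 + uv.2)) := by
    funext uv
    exact eq_FF uv.1 uv.2
  rw [heq]
  exact FF_convex
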